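/- arXiv:2605.22159 — 7 statements merged into one kernel-verified Lean document; each statement's English description precedes it below -/
import Mathlib

section
/- If L is coercive with constant c_L, then the single-layer operator 𝖵 := γ ∘ S : B → X is coercive: |⟨𝖵 g, conj g⟩_{X×B}| ≥ (c_L / ‖L‖²) ‖g‖²_B for all g ∈ B. In particular 𝖵 is injective and the single-layer equation 𝖵 b = f is uniquely solvable for every f ∈ X. -/
open NormedSpace

/-- The adjoint (dual) trace map `γ' : B = X' → V'`, `g ↦ g ∘ γ`. -/
noncomputable def gammaAdj {V X : Type*} [NormedAddCommGroup V] [NormedSpace ℂ V]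
    [NormedAddCommGroup X] [NormedSpace ℂ X] (γ : V →L[ℂ] X) :
    StrongDual ℂ X →L[ℂ] StrongDual ℂ V :=
  (ContinuousLinearMap.compL ℂ V X ℂ).flip γ

set_option maxHeartbeats 1000000 in
/-- if `L` is coercive with constant `c_L`, the single-layer operator
`𝖵 := γ ∘ S : B → X`, `𝖵 g = γ (N (γ' g))`, is coercive:
`|⟨𝖵 g, ḡ⟩_{X×B}| ≥ (c_L/‖L‖²) ‖g‖²_B`; in particular `𝖵` is injective and
`𝖵 b = f` is uniquely solvable for every `f ∈ X`. -/
theorem singleLayer_operator_coercive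
    {V X : Type*} [NormedAddCommGroup V] [InnerProductSpace ℂ V] [CompleteSpace V]
    [NormedAddCommGroup X] [InnerProductSpace ℂ X] [CompleteSpace X]
    (L : V →L[ℂ] StrongDual ℂ V) (N : StrongDual ℂ V →L[ℂ] V)
    (hNL : ∀ v, N (L v) = v) (hLN : ∀ f, L (N f) = f)
    (c_L : ℝ) (hc : 0 < c_L)
    (hcoer : ∀ v : V, c_L * ‖v‖ ^ 2 ≤ ‖L v v‖)
    (γ : V →L[ℂ] X) (hγsurj : Function.Surjective γ)
    (hquot : ∀ t : X, ‖t‖ = ⨅ v : {v : V // γ v = t}, ‖(v : V)‖) :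
    (∀ g : StrongDual ℂ X, c_L / ‖L‖ ^ 2 * ‖g‖ ^ 2 ≤ ‖g (γ (N (gammaAdj γ g)))‖) ∧
    Function.Injective (fun g : StrongDual ℂ X => γ (N (gammaAdj γ g))) ∧
    ∀ f : X, ∃! b : StrongDual ℂ X, γ (N (gammaAdj γ b)) = f := by
  -- key fact: the dual trace does not decrease norms, thanks to the quotient norm on `X`
  have hA : ∀ g : StrongDual ℂ X, ‖g‖ ≤ ‖gammaAdj γ g‖ := by
    intro g
    refine g.opNorm_le_bound (norm_nonneg _) fun t => ?_
    have hne : Nonempty {v : V // γ v = t} := ⟨⟨(hγsurj t).choose, (hγsurj t).choose_spec⟩⟩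
    rw [hquot t, Real.mul_iInf_of_nonneg (norm_nonneg _)]
    refine le_ciInf fun v => ?_
    have : g t = (gammaAdj γ g) (v : V) := by
      simp [gammaAdj, v.2]
    rw [this]
    exact (gammaAdj γ g).le_opNorm _
  -- the coercivity estimate for the single-layer operator
  have hB : ∀ g : StrongDual ℂ X, c_L / ‖L‖ ^ 2 * ‖g‖ ^ 2 ≤ ‖g (γ (N (gammaAdj γ g)))‖ := by
    intro g
    set u := N (gammaAdj γ g) with hu
    have happ : ‖g (γ u)‖ = ‖L u u‖ := by
      rw [hu, hLN]
      rfl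
    have hgn : ‖g‖ ≤ ‖L‖ * ‖u‖ := by
      calc ‖g‖ ≤ ‖gammaAdj γ g‖ := hA g
      _ = ‖L u‖ := by rw [hu, hLN]
      _ ≤ ‖L‖ * ‖u‖ := L.le_opNorm u
    rcases eq_or_ne ‖L‖ 0 with hL0 | hL0
    · rw [hL0]
      simp [norm_nonneg]
    · have h1 : c_L / ‖L‖ ^ 2 * ‖g‖ ^ 2 ≤ c_L / ‖L‖ ^ 2 * (‖L‖ * ‖u‖) ^ 2 := by
        apply mul_le_mul_of_nonneg_left _ (by positivity)
        exact pow_le_pow_left₀ (norm_nonneg g) hgn 2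
      have h2 : c_L / ‖L‖ ^ 2 * (‖L‖ * ‖u‖) ^ 2 = c_L * ‖u‖ ^ 2 := by
        field_simp
      rw [happ]
      calc c_L / ‖L‖ ^ 2 * ‖g‖ ^ 2 ≤ c_L * ‖u‖ ^ 2 := by rw [← h2]; exact h1
      _ ≤ ‖L u u‖ := hcoer u
  refine ⟨hB, ?_⟩
  set T : StrongDual ℂ X →L[ℂ] X := γ.comp (N.comp (gammaAdj γ)) with hT
  have hTapp : ∀ g, T g = γ (N (gammaAdj γ g)) := fun g => rfl
  rcases eq_or_ne ‖L‖ 0 with hL0 | hL0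
  · -- degenerate case: `V`, `X` and `StrongDual ℂ X` are all trivial
    have hLz : L = 0 := (ContinuousLinearMap.opNorm_zero_iff L).mp hL0
    have hV : ∀ v : V, v = 0 := by
      intro v
      calc v = N (L v) := (hNL v).symm
      _ = 0 := by rw [hLz]; simp
    have hX : ∀ t : X, t = 0 := by
      intro t
      obtain ⟨v, rfl⟩ := hγsurj t
      rw [hV v, map_zero]
    have hD : ∀ g : StrongDual ℂ X, g = 0 := by
      intro g
      ext t
      rw [hX t]; simp
    refine ⟨fun g1 g2 _ => by rw [hD g1, hD g2], fun f => ⟨0, ?_, fun b _ => hD b⟩⟩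
    show γ (N (gammaAdj γ 0)) = f
    rw [hX f, hX (γ (N (gammaAdj γ 0)))]
  · have hc' : 0 < c_L / ‖L‖ ^ 2 := by positivity
    -- lower bound: `c' ‖g‖ ≤ ‖T g‖`
    have hlow : ∀ g : StrongDual ℂ X, c_L / ‖L‖ ^ 2 * ‖g‖ ≤ ‖T g‖ := by
      intro g
      rcases eq_or_lt_of_le (norm_nonneg g) with hg0 | hg0
      · rw [← hg0, mul_zero]; exact norm_nonneg _
      · have h1 : c_L / ‖L‖ ^ 2 * ‖g‖ ^ 2 ≤ ‖g (T g)‖ := hB g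
        have h2 : ‖g (T g)‖ ≤ ‖g‖ * ‖T g‖ := g.le_opNorm _
        have h3 := h1.trans h2
        nlinarith [h3, hg0]
    -- injectivity
    have hinj : Function.Injective T := by
      intro g1 g2 h
      have h0 : T (g1 - g2) = 0 := by rw [map_sub, h, sub_self]
      have h4 := hlow (g1 - g2)
      rw [h0, norm_zero] at h4
      have h5 : ‖g1 - g2‖ = 0 := by nlinarith [norm_nonneg (g1 - g2)]
      exact sub_eq_zero.mp (norm_eq_zero.mp h5)
    -- antilipschitz, hence closed range
    have hbound : ∀ g : StrongDual ℂ X, ‖g‖ ≤ (c_L / ‖L‖ ^ 2)⁻¹ * ‖T g‖ := by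
      intro g
      exact (le_inv_mul_iff₀ hc').mpr (hlow g)
    have hanti : AntilipschitzWith ((c_L / ‖L‖ ^ 2)⁻¹).toNNReal T := by
      apply ContinuousLinearMap.antilipschitz_of_bound
      intro x
      rw [Real.coe_toNNReal _ (by positivity)]
      exact hbound x
    have hclosed : IsClosed (Set.range T) := hanti.isClosed_range T.uniformContinuous
    -- surjectivity via the orthogonal complement of the (closed) range
    have hsurj : Function.Surjective T := by
      set M : Submodule ℂ X := LinearMap.range (T : StrongDual ℂ X →ₗ[ℂ] X) with hM
      have hMc : IsClosed (M : Set X) := by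
        have : (M : Set X) = Set.range T := by
          ext x; simp [hM, LinearMap.mem_range]
        rw [this]; exact hclosed
      have : CompleteSpace M := hMc.completeSpace_coe
      have htop : M = ⊤ := by
        by_contra hne
        rw [← Submodule.orthogonal_eq_bot_iff] at hne
        obtain ⟨x, hxM, hx0⟩ := Submodule.exists_mem_ne_zero_of_ne_bot hne
        set g : StrongDual ℂ X := innerSL ℂ x with hg
        have hgT : g (T g) = 0 := by
          have hTgM : T g ∈ M := LinearMap.mem_range_self _ _
          have := (Submodule.mem_orthogonal M x).mp hxM (T g) hTgM
          simp only [hg, innerSL_apply_apply]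
          rw [← inner_conj_symm, this, map_zero]
        have := hB g
        rw [← hTapp, hgT, norm_zero] at this
        have h5 : ‖g‖ = 0 := by
          by_contra hne'
          have hgp : 0 < ‖g‖ := lt_of_le_of_ne (norm_nonneg g) (Ne.symm hne')
          nlinarith [mul_pos hc' (pow_pos hgp 2)]
        have : ‖x‖ = 0 := by rw [← innerSL_apply_norm ℂ x]; exact h5
        exact hx0 (norm_eq_zero.mp this)
      intro f
      have : f ∈ M := htop ▸ Submodule.mem_top
      obtain ⟨b, hb⟩ := this
      exact ⟨b, hb⟩
    exact ⟨hinj, fun f => by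
      obtain ⟨b, hb⟩ := hsurj f
      exact ⟨b, hb, fun b' hb' => hinj (hb'.trans hb.symm)⟩⟩
end

section
/- Consistency error bound: for the discrete single-layer operator 𝖵_d := γ P_d S, where P_d is the Galerkin projection onto V_d ⊂ V, the consistency error ε_con := sup_{g_h, h_h ∈ B_h, nonzero} |⟨(𝖵 − 𝖵_d) g_h, conj h_h⟩| / (‖g_h‖_B ‖h_h‖_B) satisfies ε_con ≤ C_reg(s) (‖L‖/c_L) · η_s(V_d)/β_s(B_h), where η_s(V_d) = sup_{w ∈ W^s, ‖w‖_{W^s}=1} inf_{v_d ∈ V_d} ‖w − v_d‖_V and β_s(B_h) = inf_{g_h ∈ B_h, ‖g_h‖_{B^s}=1} ‖g_h‖_B. -/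
open NormedSpace

/-- consistency error bound `ε_con ≤ C_reg(s) (‖L‖/c_L) η_s(V_d)/β_s(B_h)`
for the discrete single-layer operator `𝖵_d := γ P_d S`.  The approximation quality
`η = η_s(V_d)` of the volume space, the Bernstein constant `β = β_s(B_h)` of the
boundary space and the regularity-shift norm `C_reg` of `S : B^s → W^s` enter through
the scale norms `nBs`, `nWs`. -/
theorem consistency_error_bound
    {V X : Type*} [NormedAddCommGroup V] [InnerProductSpace ℂ V] [CompleteSpace V]
    [NormedAddCommGroup X] [InnerProductSpace ℂ X] [CompleteSpace X]
    (L : V →L[ℂ] StrongDual ℂ V) (N : StrongDual ℂ V →L[ℂ] V)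
    (hNL : ∀ v, N (L v) = v) (hLN : ∀ f, L (N f) = f)
    (c_L : ℝ) (hc : 0 < c_L)
    (hcoer : ∀ v : V, c_L * ‖v‖ ^ 2 ≤ ‖L v v‖)
    (γ : V →L[ℂ] X) (hγsurj : Function.Surjective γ)
    (hquot : ∀ t : X, ‖t‖ = ⨅ v : {v : V // γ v = t}, ‖(v : V)‖)
    (V_d : Submodule ℂ V) [FiniteDimensional ℂ V_d]
    (P : V →L[ℂ] V) (hPrange : ∀ v, P v ∈ V_d)
    (hPgal : ∀ v : V, ∀ w ∈ V_d, L (P v) w = L v w)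
    (B_h : Submodule ℂ (StrongDual ℂ X)) [FiniteDimensional ℂ B_h]
    (nBs : StrongDual ℂ X → ℝ) (nWs : V → ℝ)
    (C_reg η β : ℝ) (hCreg : 0 ≤ C_reg) (hη : 0 ≤ η) (hβ : 0 < β)
    (hreg : ∀ g ∈ B_h, nWs (N (gammaAdj γ g)) ≤ C_reg * nBs g)
    (happrox : ∀ g ∈ B_h, ∃ v_d ∈ V_d,
      ‖N (gammaAdj γ g) - v_d‖ ≤ η * nWs (N (gammaAdj γ g)))
    (hbern : ∀ g ∈ B_h, β * nBs g ≤ ‖g‖) :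
    ∀ g_h ∈ B_h, ∀ h_h ∈ B_h,
      ‖h_h (γ (N (gammaAdj γ g_h)) - γ (P (N (gammaAdj γ g_h))))‖ ≤
        C_reg * (‖L‖ / c_L) * (η / β) * ‖g_h‖ * ‖h_h‖ := by
  intro g_h hg h_h hh
  set u : V := N (gammaAdj γ g_h) with hu
  obtain ⟨v_d, hvd, hdist⟩ := happrox g_h hg
  -- Galerkin orthogonality
  have horth : ∀ w ∈ V_d, L (u - P u) w = 0 := by
    intro w hw
    simp [map_sub, hPgal u w hw]
  -- Céa's lemma
  have hcea : ‖u - P u‖ ≤ (‖L‖ / c_L) * ‖u - v_d‖ := by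
    have h1 : c_L * ‖u - P u‖ ^ 2 ≤ ‖L (u - P u) (u - P u)‖ := hcoer _
    have h2 : L (u - P u) (u - P u) = L (u - P u) (u - v_d) := by
      have h3 : L (u - P u) (P u - v_d) = 0 :=
        horth _ (Submodule.sub_mem _ (hPrange u) hvd)
      have : (u : V) - P u = (u - v_d) - (P u - v_d) := by abel
      calc L (u - P u) (u - P u) = L (u - P u) ((u - v_d) - (P u - v_d)) := by rw [← this]
        _ = L (u - P u) (u - v_d) - L (u - P u) (P u - v_d) := by rw [map_sub]
        _ = L (u - P u) (u - v_d) := by rw [h3, sub_zero]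
    have h4 : ‖L (u - P u) (u - v_d)‖ ≤ ‖L‖ * ‖u - P u‖ * ‖u - v_d‖ := by
      calc ‖L (u - P u) (u - v_d)‖ ≤ ‖L (u - P u)‖ * ‖u - v_d‖ :=
            (L (u - P u)).le_opNorm _
        _ ≤ ‖L‖ * ‖u - P u‖ * ‖u - v_d‖ := by
            gcongr; exact L.le_opNorm _
    have h5 : c_L * ‖u - P u‖ ^ 2 ≤ ‖L‖ * ‖u - P u‖ * ‖u - v_d‖ := by
      rw [h2] at h1; linarith
    rcases eq_or_lt_of_le (norm_nonneg (u - P u)) with h0 | h0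
    · rw [← h0]
      positivity
    · rw [div_mul_eq_mul_div, le_div_iff₀ hc]
      nlinarith
  -- quotient norm bound: ‖γ v‖ ≤ ‖v‖
  have hγle : ∀ v : V, ‖γ v‖ ≤ ‖v‖ := by
    intro v
    rw [hquot (γ v)]
    have hbdd : BddBelow (Set.range fun w : {w : V // γ w = γ v} => ‖(w : V)‖) :=
      ⟨0, by rintro x ⟨w, rfl⟩; exact norm_nonneg _⟩
    exact ciInf_le hbdd ⟨v, rfl⟩
  have hbern' : nBs g_h ≤ ‖g_h‖ / β := by
    rw [le_div_iff₀ hβ, mul_comm]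
    exact hbern g_h hg
  calc ‖h_h (γ u - γ (P u))‖ = ‖h_h (γ (u - P u))‖ := by rw [← map_sub]
    _ ≤ ‖h_h‖ * ‖γ (u - P u)‖ := h_h.le_opNorm _
    _ ≤ ‖h_h‖ * ‖u - P u‖ := by have := hγle (u - P u); gcongr
    _ ≤ ‖h_h‖ * ((‖L‖ / c_L) * ‖u - v_d‖) := by gcongr
    _ ≤ ‖h_h‖ * ((‖L‖ / c_L) * (η * nWs u)) := by gcongr
    _ ≤ ‖h_h‖ * ((‖L‖ / c_L) * (η * (C_reg * nBs g_h))) := by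
        have hLc : 0 ≤ ‖L‖ / c_L := by positivity
        gcongr
        exact hreg g_h hg
    _ ≤ ‖h_h‖ * ((‖L‖ / c_L) * (η * (C_reg * (‖g_h‖ / β)))) := by gcongr
    _ = C_reg * (‖L‖ / c_L) * (η / β) * ‖g_h‖ * ‖h_h‖ := by ring
end

section
/- Quasi-best approximation of kernel-free BEM: if the consistency error satisfies ε_con ≤ c_L/(2‖L‖²), then the discrete problem ⟨𝖵_d b_h, conj g_h⟩ = ⟨f, conj g_h⟩ for all g_h ∈ B_h has a unique solution b_h ∈ B_h, and with C_qb := 2‖L‖³ max{1, 2‖N‖}/c_L² it holds ‖b − b_h‖_B ≤ C_qb (min_{g_h ∈ B_h} ‖b − g_h‖_B + min_{v_d ∈ V_d} ‖S b − v_d‖_V). -/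
open NormedSpace

set_option maxHeartbeats 4000000 in
/-- quasi-best approximation of the kernel-free BEM.  If the consistency
error `ε_con ≤ c_L/(2‖L‖²)`, then the discrete problem
`⟨𝖵_d b_h, ḡ_h⟩ = ⟨f, ḡ_h⟩ ∀ g_h ∈ B_h` (with `𝖵_d = γ P_d S`) has a unique solution
`b_h ∈ B_h`, and with `C_qb = 2‖L‖³ max{1, 2‖N‖}/c_L²` one has
`‖b − b_h‖ ≤ C_qb (min_{g_h∈B_h}‖b − g_h‖ + min_{v_d∈V_d}‖S b − v_d‖)`. -/
theorem kernel_free_BEM_quasi_best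
    {V X : Type*} [NormedAddCommGroup V] [InnerProductSpace ℂ V] [CompleteSpace V]
    [NormedAddCommGroup X] [InnerProductSpace ℂ X] [CompleteSpace X]
    (L : V →L[ℂ] StrongDual ℂ V) (N : StrongDual ℂ V →L[ℂ] V)
    (hNL : ∀ v, N (L v) = v) (hLN : ∀ f, L (N f) = f)
    (c_L : ℝ) (hc : 0 < c_L)
    (hcoer : ∀ v : V, c_L * ‖v‖ ^ 2 ≤ ‖L v v‖)
    (γ : V →L[ℂ] X) (hγsurj : Function.Surjective γ)
    (hquot : ∀ t : X, ‖t‖ = ⨅ v : {v : V // γ v = t}, ‖(v : V)‖)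
    (V_d : Submodule ℂ V) [FiniteDimensional ℂ V_d]
    (P : V →L[ℂ] V) (hPrange : ∀ v, P v ∈ V_d)
    (hPgal : ∀ v : V, ∀ w ∈ V_d, L (P v) w = L v w)
    (B_h : Submodule ℂ (StrongDual ℂ X)) [FiniteDimensional ℂ B_h]
    (ε_con : ℝ)
    (hεcon : ∀ g_h ∈ B_h, ∀ h_h ∈ B_h,
      ‖h_h (γ (N (gammaAdj γ g_h)) - γ (P (N (gammaAdj γ g_h))))‖ ≤
        ε_con * ‖g_h‖ * ‖h_h‖)
    (hsmall : ε_con ≤ c_L / (2 * ‖L‖ ^ 2))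
    (f : X) (b : StrongDual ℂ X)
    (hb : γ (N (gammaAdj γ b)) = f) :
    (∃! b_h : B_h, ∀ g_h ∈ B_h, g_h (γ (P (N (gammaAdj γ (b_h : StrongDual ℂ X))))) = g_h f) ∧
    ∀ b_h ∈ B_h, (∀ g_h ∈ B_h, g_h (γ (P (N (gammaAdj γ b_h)))) = g_h f) →
      ∀ g_h ∈ B_h, ∀ v_d ∈ V_d,
        ‖b - b_h‖ ≤ 2 * ‖L‖ ^ 3 * max 1 (2 * ‖N‖) / c_L ^ 2 *
          (‖b - g_h‖ + ‖N (gammaAdj γ b) - v_d‖) := by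
  by_cases hV : ∀ v : V, v = 0
  · -- degenerate case: V = 0, hence X = 0 and all duals vanish
    have hX0 : ∀ t : X, t = 0 := by
      intro t
      obtain ⟨v, rfl⟩ := hγsurj t
      rw [hV v, map_zero]
    have hg0 : ∀ g : StrongDual ℂ X, g = 0 := by
      intro g
      ext t
      rw [hX0 t]
      simp
    constructor
    · refine ⟨0, ?_, ?_⟩
      · intro g_h _
        rw [hg0 g_h]; simp
      · intro y _
        apply Subtype.ext
        rw [hg0 (y : StrongDual ℂ X), hg0 ((0 : B_h) : StrongDual ℂ X)]
    · intro b_h _ _ g_h _ v_d _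
      have : b - b_h = 0 := by rw [hg0 b, hg0 b_h, sub_zero]
      rw [this, norm_zero]
      have h1 : (0:ℝ) ≤ 2 * ‖L‖ ^ 3 * max 1 (2 * ‖N‖) / c_L ^ 2 := by positivity
      have h2 : (0:ℝ) ≤ ‖b - g_h‖ + ‖N (gammaAdj γ b) - v_d‖ := by positivity
      exact mul_nonneg h1 h2
  · push_neg at hV
    obtain ⟨v₀, hv₀⟩ := hV
    -- basic norm facts
    have hγle : ∀ v : V, ‖γ v‖ ≤ ‖v‖ := by
      intro v
      rw [hquot (γ v)]
      have hbdd : BddBelow (Set.range fun v' : {v' : V // γ v' = γ v} => ‖(v' : V)‖) := by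
        refine ⟨0, ?_⟩
        rintro x ⟨i, rfl⟩
        exact norm_nonneg _
      exact ciInf_le hbdd ⟨v, rfl⟩
    have hadj_le : ∀ g : StrongDual ℂ X, ‖gammaAdj γ g‖ ≤ ‖g‖ := by
      intro g
      refine ContinuousLinearMap.opNorm_le_bound _ (norm_nonneg g) fun v => ?_
      calc ‖gammaAdj γ g v‖ = ‖g (γ v)‖ := rfl
        _ ≤ ‖g‖ * ‖γ v‖ := g.le_opNorm _
        _ ≤ ‖g‖ * ‖v‖ := by
            exact mul_le_mul_of_nonneg_left (hγle v) (norm_nonneg g)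
    have hadj_ge : ∀ g : StrongDual ℂ X, ‖g‖ ≤ ‖gammaAdj γ g‖ := by
      intro g
      refine ContinuousLinearMap.opNorm_le_bound _ (norm_nonneg _) fun t => ?_
      rcases (norm_nonneg (gammaAdj γ g)).eq_or_lt with h0 | hpos
      · obtain ⟨v, rfl⟩ := hγsurj t
        have : gammaAdj γ g = 0 := by
          rw [← norm_eq_zero]; exact h0.symm
        have hz : g (γ v) = 0 := by
          have := congrFun (congrArg DFunLike.coe this) v
          exact (by simpa using this : gammaAdj γ g v = 0)
        rw [hz, norm_zero]
        positivity
      · have hne : Nonempty {v : V // γ v = t} :=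
          ⟨⟨(hγsurj t).choose, (hγsurj t).choose_spec⟩⟩
        rw [hquot t, mul_comm, ← div_le_iff₀ hpos]
        refine le_ciInf fun v => ?_
        rw [div_le_iff₀ hpos]
        obtain ⟨v, hv⟩ := v
        calc ‖g t‖ = ‖gammaAdj γ g v‖ := by rw [← hv]; rfl
          _ ≤ ‖gammaAdj γ g‖ * ‖v‖ := (gammaAdj γ g).le_opNorm v
          _ = ‖v‖ * ‖gammaAdj γ g‖ := mul_comm _ _
    -- positivity of ‖L‖ and ‖L‖‖N‖ ≥ 1
    have hv₀pos : (0:ℝ) < ‖v₀‖ := norm_pos_iff.mpr hv₀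
    have hLc : c_L ≤ ‖L‖ := by
      have h1 := hcoer v₀
      have h2 : ‖L v₀ v₀‖ ≤ ‖L‖ * ‖v₀‖ * ‖v₀‖ :=
        ((L v₀).le_opNorm v₀).trans
          (mul_le_mul_of_nonneg_right (L.le_opNorm v₀) (norm_nonneg _))
      have hsq : (0:ℝ) < ‖v₀‖ ^ 2 := by positivity
      nlinarith
    have hLpos : (0:ℝ) < ‖L‖ := lt_of_lt_of_le hc hLc
    have hLN1 : 1 ≤ ‖L‖ * ‖N‖ := by
      have h1 : ‖v₀‖ ≤ ‖N‖ * (‖L‖ * ‖v₀‖) := by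
        calc ‖v₀‖ = ‖N (L v₀)‖ := by rw [hNL v₀]
          _ ≤ ‖N‖ * ‖L v₀‖ := N.le_opNorm _
          _ ≤ ‖N‖ * (‖L‖ * ‖v₀‖) :=
              mul_le_mul_of_nonneg_left (L.le_opNorm v₀) (norm_nonneg N)
      nlinarith
    -- boundedness of the Galerkin projector
    have hPnorm : ∀ v : V, c_L * ‖P v‖ ≤ ‖L‖ * ‖v‖ := by
      intro v
      have h1 : c_L * ‖P v‖ ^ 2 ≤ ‖L v (P v)‖ := by
        rw [← hPgal v (P v) (hPrange v)]; exact hcoer (P v)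
      have h2 : ‖L v (P v)‖ ≤ ‖L‖ * ‖v‖ * ‖P v‖ :=
        ((L v).le_opNorm _).trans
          (mul_le_mul_of_nonneg_right (L.le_opNorm v) (norm_nonneg _))
      rcases (norm_nonneg (P v)).eq_or_lt with h0 | hp
      · rw [← h0, mul_zero]; positivity
      · nlinarith
    -- Céa lemma for the Galerkin projector
    have hCea' : ∀ w : V, ∀ v_d ∈ V_d, c_L * ‖P w - w‖ ≤ ‖L‖ * ‖w - v_d‖ := by
      intro w v_d hv_d
      have horth : ∀ u ∈ V_d, L (P w - w) u = 0 := by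
        intro u hu
        rw [map_sub, ContinuousLinearMap.sub_apply, hPgal w u hu, sub_self]
      have hkey : L (P w - w) (P w - w) = L (P w - w) (v_d - w) := by
        have h1 := horth (P w - v_d) (Submodule.sub_mem _ (hPrange w) hv_d)
        have h2 : L (P w - w) (P w - w) =
            L (P w - w) (P w - v_d) + L (P w - w) (v_d - w) := by
          rw [← map_add]
          congr 1
          abel
        rw [h2, h1, zero_add]
      have h1 : c_L * ‖P w - w‖ ^ 2 ≤ ‖L (P w - w) (v_d - w)‖ := by
        rw [← hkey]; exact hcoer _
      have h2 : ‖L (P w - w) (v_d - w)‖ ≤ ‖L‖ * ‖P w - w‖ * ‖w - v_d‖ := by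
        rw [norm_sub_rev w v_d]
        exact ((L _).le_opNorm _).trans
          (mul_le_mul_of_nonneg_right (L.le_opNorm _) (norm_nonneg _))
      rcases (norm_nonneg (P w - w)).eq_or_lt with h0 | hp
      · rw [← h0, mul_zero]; positivity
      · nlinarith
    -- coercivity of V : B → B'
    have hcoerB : ∀ g : StrongDual ℂ X,
        c_L * ‖g‖ ^ 2 ≤ ‖L‖ ^ 2 * ‖g (γ (N (gammaAdj γ g)))‖ := by
      intro g
      have e1 : g (γ (N (gammaAdj γ g))) =
          L (N (gammaAdj γ g)) (N (gammaAdj γ g)) := by rw [hLN]; rfl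
      have h1 : c_L * ‖N (gammaAdj γ g)‖ ^ 2 ≤ ‖g (γ (N (gammaAdj γ g)))‖ := by
        rw [e1]; exact hcoer _
      have h2 : ‖g‖ ≤ ‖L‖ * ‖N (gammaAdj γ g)‖ := by
        calc ‖g‖ ≤ ‖gammaAdj γ g‖ := hadj_ge g
          _ = ‖L (N (gammaAdj γ g))‖ := by rw [hLN]
          _ ≤ ‖L‖ * ‖N (gammaAdj γ g)‖ := L.le_opNorm _
      have h3 : ‖g‖ * ‖g‖ ≤ (‖L‖ * ‖N (gammaAdj γ g)‖) * (‖L‖ * ‖N (gammaAdj γ g)‖) :=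
        mul_le_mul h2 h2 (norm_nonneg g) (by positivity)
      nlinarith [norm_nonneg (g (γ (N (gammaAdj γ g)))), hc]
    -- discrete coercivity
    have hεL : ε_con * ‖L‖ ^ 2 ≤ c_L / 2 := by
      rw [le_div_iff₀ (by positivity : (0:ℝ) < 2 * ‖L‖ ^ 2)] at hsmall
      nlinarith
    have hdisc : ∀ g ∈ B_h,
        c_L * ‖g‖ ^ 2 ≤ 2 * ‖L‖ ^ 2 * ‖g (γ (P (N (gammaAdj γ g))))‖ := by
      intro g hg
      have h1 := hcoerB g
      have h2 := hεcon g hg g hg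
      have h3 : ‖g (γ (N (gammaAdj γ g)))‖ ≤
          ‖g (γ (P (N (gammaAdj γ g))))‖ +
            ‖g (γ (N (gammaAdj γ g)) - γ (P (N (gammaAdj γ g))))‖ := by
        have e1 : g (γ (N (gammaAdj γ g)) - γ (P (N (gammaAdj γ g)))) =
            g (γ (N (gammaAdj γ g))) - g (γ (P (N (gammaAdj γ g)))) := map_sub g _ _
        rw [e1]
        exact norm_le_norm_add_norm_sub' _ _
      set a := ‖g (γ (P (N (gammaAdj γ g))))‖ with ha
      set q := ‖g (γ (N (gammaAdj γ g)))‖ with hq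
      set r := ‖g (γ (N (gammaAdj γ g)) - γ (P (N (gammaAdj γ g))))‖ with hr
      have hann : (0:ℝ) ≤ a := ha ▸ norm_nonneg _
      have hL2 : (0:ℝ) < ‖L‖ ^ 2 := by positivity
      have s1 : ‖L‖ ^ 2 * q ≤ ‖L‖ ^ 2 * (a + r) := mul_le_mul_of_nonneg_left h3 hL2.le
      have s2 : ‖L‖ ^ 2 * r ≤ ‖L‖ ^ 2 * (ε_con * ‖g‖ * ‖g‖) :=
        mul_le_mul_of_nonneg_left h2 hL2.le
      have s3 : ‖L‖ ^ 2 * (ε_con * ‖g‖ * ‖g‖) ≤ c_L / 2 * ‖g‖ ^ 2 := by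
        nlinarith [mul_le_mul_of_nonneg_right hεL (sq_nonneg ‖g‖)]
      nlinarith [h1, s1, s2, s3]
    -- the discrete operator on B_h
    let T : B_h →ₗ[ℂ] Module.Dual ℂ B_h :=
      { toFun := fun g =>
          { toFun := fun h => (h : StrongDual ℂ X) (γ (P (N (gammaAdj γ (g : StrongDual ℂ X)))))
            map_add' := by intros; simp
            map_smul' := by intros; simp }
        map_add' := by
          intro g g'
          ext h
          simp [map_add]
        map_smul' := by
          intro c g
          ext h
          simp [map_smul] }
    have hTapp : ∀ (g h : B_h),
        T g h = (h : StrongDual ℂ X) (γ (P (N (gammaAdj γ (g : StrongDual ℂ X))))) := fun _ _ => rfl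
    have hTinj : Function.Injective T := by
      rw [injective_iff_map_eq_zero]
      intro g hg0
      have h1 : (g : StrongDual ℂ X) (γ (P (N (gammaAdj γ (g : StrongDual ℂ X))))) = 0 := by
        have := congrFun (congrArg DFunLike.coe hg0) g
        simpa [hTapp] using this
      have h2 := hdisc (g : StrongDual ℂ X) g.2
      rw [h1, norm_zero, mul_zero] at h2
      have h4 : ‖(g : StrongDual ℂ X)‖ ^ 2 ≤ 0 := by nlinarith [h2]
      have h3 : ‖(g : StrongDual ℂ X)‖ = 0 :=
        pow_eq_zero_iff two_ne_zero |>.mp (le_antisymm h4 (sq_nonneg _))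
      ext1
      simpa using norm_eq_zero.mp h3
    have hTsurj : Function.Surjective T :=
      by
        have H : Module.finrank ℂ B_h = Module.finrank ℂ (Module.Dual ℂ B_h) :=
          (Subspace.dual_finrank_eq (K := ℂ) (V := B_h)).symm
        haveI : Module.Free ℂ B_h := Module.Free.of_divisionRing ℂ B_h
        haveI : Module.Projective ℂ B_h := Module.Projective.of_free
        haveI : FiniteDimensional ℂ (Module.Dual ℂ B_h) := Module.dual_finite
        have key := set_option synthInstance.maxHeartbeats 400000 in
          LinearMap.injective_iff_surjective_of_finrank_eq_finrank (K := ℂ) (V := B_h)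
            (V₂ := Module.Dual ℂ B_h) H (f := T)
        exact key.mp hTinj
    obtain ⟨bh, hbh⟩ := hTsurj
      { toFun := fun h => (h : StrongDual ℂ X) f
        map_add' := by intros; simp
        map_smul' := by intros; simp }
    have hbh_sol : ∀ g_h ∈ B_h, g_h (γ (P (N (gammaAdj γ (bh : StrongDual ℂ X))))) = g_h f := by
      intro g_h hg_h
      have := congrFun (congrArg DFunLike.coe hbh) ⟨g_h, hg_h⟩
      simpa [hTapp] using this
    constructor
    · refine ⟨bh, hbh_sol, ?_⟩
      intro y hy
      apply hTinj
      rw [hbh]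
      ext h
      exact hy (h : StrongDual ℂ X) h.2
    · -- quasi-best approximation estimate
      intro b_h hbhm hsol g_h hg_h v_d hv_d
      set e := g_h - b_h with he_def
      have he : e ∈ B_h := Submodule.sub_mem _ hg_h hbhm
      -- key identity
      have hkey : e (γ (P (N (gammaAdj γ e)))) =
          e (γ (P (N (gammaAdj γ g_h)) - N (gammaAdj γ b))) := by
        have h1 : e (γ (P (N (gammaAdj γ e)))) =
            e (γ (P (N (gammaAdj γ g_h)))) - e (γ (P (N (gammaAdj γ b_h)))) := by
          rw [he_def]
          rw [map_sub (gammaAdj γ), map_sub N, map_sub P, map_sub γ, map_sub]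
        have h2 : e (γ (P (N (gammaAdj γ b_h)))) = e (γ (N (gammaAdj γ b))) := by
          rw [hsol e he, hb]
        rw [h1, h2, ← map_sub, ← map_sub γ]
      have hcoere := hdisc e he
      set A := ‖b - g_h‖ with hA
      set D := ‖N (gammaAdj γ b) - v_d‖ with hD
      have hAnn : (0:ℝ) ≤ A := hA ▸ norm_nonneg _
      have hDnn : (0:ℝ) ≤ D := hD ▸ norm_nonneg _
      -- bound on the right-hand side (multiplied through by c_L)
      have hmid : c_L * ‖P (N (gammaAdj γ g_h)) - N (gammaAdj γ b)‖ ≤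
          ‖L‖ * (‖N‖ * A + D) := by
        have tri : ‖P (N (gammaAdj γ g_h)) - N (gammaAdj γ b)‖ ≤
            ‖P (N (gammaAdj γ g_h)) - P (N (gammaAdj γ b))‖ +
              ‖P (N (gammaAdj γ b)) - N (gammaAdj γ b)‖ :=
          norm_sub_le_norm_sub_add_norm_sub _ _ _
        have t1 : c_L * ‖P (N (gammaAdj γ g_h)) - P (N (gammaAdj γ b))‖ ≤
            ‖L‖ * (‖N‖ * A) := by
          have e1 : P (N (gammaAdj γ g_h)) - P (N (gammaAdj γ b)) =
              P (N (gammaAdj γ (g_h - b))) := by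
            rw [map_sub (gammaAdj γ), map_sub N, map_sub P]
          rw [e1]
          have h1 := hPnorm (N (gammaAdj γ (g_h - b)))
          have h2 : ‖N (gammaAdj γ (g_h - b))‖ ≤ ‖N‖ * A := by
            rw [hA, ← norm_sub_rev g_h b]
            exact (N.le_opNorm _).trans
              (mul_le_mul_of_nonneg_left (hadj_le _) (norm_nonneg N))
          exact h1.trans (mul_le_mul_of_nonneg_left h2 (norm_nonneg L))
        have t2 : c_L * ‖P (N (gammaAdj γ b)) - N (gammaAdj γ b)‖ ≤ ‖L‖ * D :=
          hCea' (N (gammaAdj γ b)) v_d hv_d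
        nlinarith [mul_le_mul_of_nonneg_left tri hc.le]
      -- bound on ‖e‖
      have h1 : ‖e (γ (P (N (gammaAdj γ e))))‖ ≤
          ‖e‖ * ‖P (N (gammaAdj γ g_h)) - N (gammaAdj γ b)‖ := by
        rw [hkey]
        calc ‖e (γ (P (N (gammaAdj γ g_h)) - N (gammaAdj γ b)))‖ ≤
            ‖e‖ * ‖γ (P (N (gammaAdj γ g_h)) - N (gammaAdj γ b))‖ := e.le_opNorm _
          _ ≤ ‖e‖ * ‖P (N (gammaAdj γ g_h)) - N (gammaAdj γ b)‖ :=
              mul_le_mul_of_nonneg_left (hγle _) (norm_nonneg e)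
      set R := ‖P (N (gammaAdj γ g_h)) - N (gammaAdj γ b)‖ with hR
      have hRnn : (0:ℝ) ≤ R := hR ▸ norm_nonneg _
      set t := ‖e (γ (P (N (gammaAdj γ e))))‖ with ht
      have htnn : (0:ℝ) ≤ t := ht ▸ norm_nonneg _
      have he_bound : c_L ^ 2 * ‖e‖ ≤ 2 * ‖L‖ ^ 3 * (‖N‖ * A + D) := by
        rcases (norm_nonneg e).eq_or_lt with h0 | hp
        · rw [← h0, mul_zero]
          positivity
        · -- c_L ‖e‖² ≤ 2‖L‖² t ≤ 2‖L‖² ‖e‖ R, cancel ‖e‖, multiply by c_L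
          have s1 : c_L * ‖e‖ ^ 2 ≤ 2 * ‖L‖ ^ 2 * (‖e‖ * R) :=
            hcoere.trans (mul_le_mul_of_nonneg_left h1 (by positivity))
          have s2 : c_L * ‖e‖ ≤ 2 * ‖L‖ ^ 2 * R := by
            nlinarith [hp]
          have s3 : c_L * (c_L * ‖e‖) ≤ 2 * ‖L‖ ^ 2 * (c_L * R) := by
            nlinarith [mul_le_mul_of_nonneg_left s2 hc.le]
          have s4 : 2 * ‖L‖ ^ 2 * (c_L * R) ≤ 2 * ‖L‖ ^ 2 * (‖L‖ * (‖N‖ * A + D)) :=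
            mul_le_mul_of_nonneg_left hmid (by positivity)
          nlinarith [s3, s4]
      -- final combination
      have htri : ‖b - b_h‖ ≤ A + ‖e‖ := by
        have hbb : b - b_h = (b - g_h) + e := by rw [he_def]; abel
        rw [hbb, hA]
        exact norm_add_le _ _
      set M := max 1 (2 * ‖N‖) with hM
      have hM1 : (1:ℝ) ≤ M := le_max_left _ _
      have hM2 : 2 * ‖N‖ ≤ M := le_max_right _ _
      have hcoeff : c_L ^ 2 + 2 * ‖L‖ ^ 3 * ‖N‖ ≤ 2 * ‖L‖ ^ 3 * M := by
        nlinarith [hLc, hLN1, hc, norm_nonneg N, hLpos,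
          mul_le_mul_of_nonneg_left hM2 (by positivity : (0:ℝ) ≤ ‖L‖ ^ 3),
          mul_le_mul_of_nonneg_left hLN1 (by positivity : (0:ℝ) ≤ 2 * ‖L‖ ^ 2)]
      rw [div_mul_eq_mul_div, le_div_iff₀ (by positivity : (0:ℝ) < c_L ^ 2)]
      have hL3M : 2 * ‖L‖ ^ 3 ≤ 2 * ‖L‖ ^ 3 * M := by nlinarith [hM1, hLpos]
      have step1 : ‖b - b_h‖ * c_L ^ 2 ≤ (A + ‖e‖) * c_L ^ 2 :=
        mul_le_mul_of_nonneg_right htri (sq_nonneg c_L)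
      have step2 := mul_le_mul_of_nonneg_right hcoeff hAnn
      have step3 := mul_le_mul_of_nonneg_right hL3M hDnn
      linarith [step1, step2, step3, he_bound]
end

section
/- Coercivity of the discrete single-layer operator: if ε_con ≤ c_L/(2‖L‖²), then 𝖵_d is coercive on B_h with |⟨𝖵_d g_h, conj g_h⟩| ≥ (c_L/(2‖L‖²)) ‖g_h‖²_B for all g_h ∈ B_h; in particular the discrete problem is well posed. -/
open NormedSpace

/-- coercivity of the discrete single-layer operator `𝖵_d = γ P_d S` on
`B_h`: if `ε_con ≤ c_L/(2‖L‖²)`, then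
`|⟨𝖵_d g_h, ḡ_h⟩| ≥ (c_L/(2‖L‖²)) ‖g_h‖²` for all `g_h ∈ B_h`. -/
theorem discrete_singleLayer_coercive
    {V X : Type*} [NormedAddCommGroup V] [InnerProductSpace ℂ V] [CompleteSpace V]
    [NormedAddCommGroup X] [InnerProductSpace ℂ X] [CompleteSpace X]
    (L : V →L[ℂ] StrongDual ℂ V) (N : StrongDual ℂ V →L[ℂ] V)
    (hNL : ∀ v, N (L v) = v) (hLN : ∀ f, L (N f) = f)
    (c_L : ℝ) (hc : 0 < c_L)
    (hcoer : ∀ v : V, c_L * ‖v‖ ^ 2 ≤ ‖L v v‖)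
    (γ : V →L[ℂ] X) (hγsurj : Function.Surjective γ)
    (hquot : ∀ t : X, ‖t‖ = ⨅ v : {v : V // γ v = t}, ‖(v : V)‖)
    (V_d : Submodule ℂ V) [FiniteDimensional ℂ V_d]
    (P : V →L[ℂ] V) (hPrange : ∀ v, P v ∈ V_d)
    (hPgal : ∀ v : V, ∀ w ∈ V_d, L (P v) w = L v w)
    (B_h : Submodule ℂ (StrongDual ℂ X)) [FiniteDimensional ℂ B_h]
    (ε_con : ℝ)
    (hεcon : ∀ g_h ∈ B_h, ∀ h_h ∈ B_h,
      ‖h_h (γ (N (gammaAdj γ g_h)) - γ (P (N (gammaAdj γ g_h))))‖ ≤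
        ε_con * ‖g_h‖ * ‖h_h‖)
    (hsmall : ε_con ≤ c_L / (2 * ‖L‖ ^ 2)) :
    ∀ g_h ∈ B_h, c_L / (2 * ‖L‖ ^ 2) * ‖g_h‖ ^ 2 ≤
      ‖g_h (γ (P (N (gammaAdj γ g_h))))‖ := by
  intro g hg
  by_cases hL0 : ‖L‖ = 0
  · simp [hL0, div_zero]
  have hLpos : 0 < ‖L‖ := lt_of_le_of_ne (norm_nonneg L) (Ne.symm hL0)
  set f : StrongDual ℂ V := gammaAdj γ g with hf
  set v : V := N f with hv
  -- gammaAdj γ g = g ∘ γ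
  have hfapp : ∀ w : V, f w = g (γ w) := fun w => rfl
  -- ‖g‖ ≤ ‖f‖
  have hgf : ‖g‖ ≤ ‖f‖ := by
    apply ContinuousLinearMap.opNorm_le_bound _ (norm_nonneg f)
    intro t
    rw [hquot t, Real.mul_iInf_of_nonneg (norm_nonneg f)]
    haveI : Nonempty {w : V // γ w = t} := by
      obtain ⟨w, hw⟩ := hγsurj t
      exact ⟨⟨w, hw⟩⟩
    apply le_ciInf
    intro ⟨w, hw⟩
    calc ‖g t‖ = ‖f w‖ := by rw [hfapp, hw]
      _ ≤ ‖f‖ * ‖w‖ := f.le_opNorm w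
  -- ‖f‖ ≤ ‖L‖ * ‖v‖
  have hfv : ‖f‖ ≤ ‖L‖ * ‖v‖ := by
    have : L v = f := hLN f
    calc ‖f‖ = ‖L v‖ := by rw [this]
      _ ≤ ‖L‖ * ‖v‖ := L.le_opNorm v
  -- continuous coercivity: (c_L/‖L‖²) ‖g‖² ≤ ‖g (γ v)‖
  have hcont : c_L / ‖L‖ ^ 2 * ‖g‖ ^ 2 ≤ ‖g (γ v)‖ := by
    have h1 : c_L * ‖v‖ ^ 2 ≤ ‖L v v‖ := hcoer v
    have h2 : ‖L v v‖ = ‖g (γ v)‖ := by rw [hLN f]; rw [hfapp]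
    have h3 : ‖g‖ ≤ ‖L‖ * ‖v‖ := hgf.trans hfv
    rw [div_mul_eq_mul_div, div_le_iff₀ (by positivity)]
    have hnn : (0:ℝ) ≤ ‖g‖ := norm_nonneg g
    nlinarith [norm_nonneg v, mul_le_mul h3 h3 hnn (by positivity : (0:ℝ) ≤ ‖L‖ * ‖v‖)]
  -- perturbation bound
  have hpert : ‖g (γ v - γ (P v))‖ ≤ c_L / (2 * ‖L‖ ^ 2) * ‖g‖ ^ 2 := by
    have := hεcon g hg g hg
    calc ‖g (γ v - γ (P v))‖ ≤ ε_con * ‖g‖ * ‖g‖ := this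
      _ ≤ c_L / (2 * ‖L‖ ^ 2) * ‖g‖ ^ 2 := by
        have hnn : (0:ℝ) ≤ ‖g‖ := norm_nonneg g
        nlinarith
  -- triangle inequality
  have hsplit : g (γ v) = g (γ (P v)) + g (γ v - γ (P v)) := by
    rw [map_sub]; ring
  have htri : ‖g (γ v)‖ ≤ ‖g (γ (P v))‖ + ‖g (γ v - γ (P v))‖ := by
    rw [hsplit]; exact norm_add_le _ _
  have hL2 : (0:ℝ) < ‖L‖ ^ 2 := by positivity
  have key : c_L / ‖L‖ ^ 2 * ‖g‖ ^ 2 - c_L / (2 * ‖L‖ ^ 2) * ‖g‖ ^ 2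
      = c_L / (2 * ‖L‖ ^ 2) * ‖g‖ ^ 2 := by
    field_simp; ring
  linarith
end

section
/- Jump relation: in the second-order setting, for every g ∈ H^{-1/2}(Σ) the single-layer potential v := S g satisfies [∂_ν v]_Σ = g, i.e. the conormal jump of S g across Σ equals the density g; conversely every v in the space W of solutions satisfies the Green representation v = S([∂_ν v]_Σ). Abstractly: if the jump operator J : W → B is defined by ⟨J v, conj(γ w)⟩_{B×X} = ℓ(v, w) for all w ∈ V, then J ∘ S = id_B and S ∘ J = id_W. -/
open NormedSpace

/-- jump relation and single-layer Green representation.  If the jump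
operator `J` satisfies `⟨J v, γ w⟩ = ℓ(v, w)` for all `w ∈ V` and `L`-harmonic `v`,
then `J ∘ S = id_B` on `B` and `S ∘ J = id_W` on the space `W` of `L`-harmonic
functions, where `S = L⁻¹ γ'` is the single-layer potential. -/
theorem jump_relation
    {V X : Type*} [NormedAddCommGroup V] [InnerProductSpace ℂ V] [CompleteSpace V]
    [NormedAddCommGroup X] [InnerProductSpace ℂ X] [CompleteSpace X]
    (L : V →L[ℂ] StrongDual ℂ V) (N : StrongDual ℂ V →L[ℂ] V)
    (hNL : ∀ v, N (L v) = v) (hLN : ∀ f, L (N f) = f)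
    (c_L : ℝ) (hc : 0 < c_L)
    (hcoer : ∀ v : V, c_L * ‖v‖ ^ 2 ≤ ‖L v v‖)
    (γ : V →L[ℂ] X) (hγsurj : Function.Surjective γ)
    (hquot : ∀ t : X, ‖t‖ = ⨅ v : {v : V // γ v = t}, ‖(v : V)‖)
    (J : V → StrongDual ℂ X)
    (hJ : ∀ v : V, (∀ w : V, γ w = 0 → L v w = 0) →
      ∀ w : V, J v (γ w) = L v w) :
    (∀ g : StrongDual ℂ X, J (N (gammaAdj γ g)) = g) ∧
    (∀ v : V, (∀ w : V, γ w = 0 → L v w = 0) → N (gammaAdj γ (J v)) = v) := by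
  have hS : ∀ g : StrongDual ℂ X, ∀ w : V, L (N (gammaAdj γ g)) w = g (γ w) := by
    intro g w
    rw [hLN]
    rfl
  constructor
  · intro g
    have harm : ∀ w : V, γ w = 0 → L (N (gammaAdj γ g)) w = 0 := by
      intro w hw
      rw [hS, hw, map_zero]
    apply ContinuousLinearMap.ext
    intro t
    obtain ⟨w, rfl⟩ := hγsurj t
    rw [hJ _ harm, hS]
  · intro v hv
    have : gammaAdj γ (J v) = L v := by
      apply ContinuousLinearMap.ext
      intro w
      exact hJ v hv w
    rw [this, hNL]
end

section
/- The single-layer potential S : B → W is a bijection onto the space W of L-harmonic functions, with bounded inverse given by the jump operator J. -/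
open NormedSpace

/-- the single-layer potential `S = L⁻¹ γ'` is a bijection from `B` onto
the space `W = {v : ℓ(v,w) = 0 ∀ w ∈ ker γ}` of `L`-harmonic functions, with bounded
inverse given by the jump operator `J` (defined by `⟨J v, γ w⟩ = ℓ(v, w)`). -/
theorem singleLayer_bijection_onto_harmonic
    {V X : Type*} [NormedAddCommGroup V] [InnerProductSpace ℂ V] [CompleteSpace V]
    [NormedAddCommGroup X] [InnerProductSpace ℂ X] [CompleteSpace X]
    (L : V →L[ℂ] StrongDual ℂ V) (N : StrongDual ℂ V →L[ℂ] V)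
    (hNL : ∀ v, N (L v) = v) (hLN : ∀ f, L (N f) = f)
    (c_L : ℝ) (hc : 0 < c_L)
    (hcoer : ∀ v : V, c_L * ‖v‖ ^ 2 ≤ ‖L v v‖)
    (γ : V →L[ℂ] X) (hγsurj : Function.Surjective γ)
    (hquot : ∀ t : X, ‖t‖ = ⨅ v : {v : V // γ v = t}, ‖(v : V)‖)
    (J : V → StrongDual ℂ X)
    (hJ : ∀ v : V, (∀ w : V, γ w = 0 → L v w = 0) →
      ∀ w : V, J v (γ w) = L v w) :
    Set.BijOn (fun g : StrongDual ℂ X => N (gammaAdj γ g)) Set.univ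
      {v : V | ∀ w : V, γ w = 0 → L v w = 0} ∧
    (∀ v ∈ {v : V | ∀ w : V, γ w = 0 → L v w = 0}, N (gammaAdj γ (J v)) = v) ∧
    ∃ C : ℝ, 0 < C ∧ ∀ v ∈ {v : V | ∀ w : V, γ w = 0 → L v w = 0},
      ‖J v‖ ≤ C * ‖v‖ := by

  have hga : ∀ (g : StrongDual ℂ X) (v : V), gammaAdj γ g v = g (γ v) := fun g v => rfl
  -- key: for v harmonic, gammaAdj γ (J v) = L v
  have hkey : ∀ v ∈ {v : V | ∀ w : V, γ w = 0 → L v w = 0},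
      gammaAdj γ (J v) = L v := by
    intro v hv
    ext w
    exact hJ v hv w
  have hinv : ∀ v ∈ {v : V | ∀ w : V, γ w = 0 → L v w = 0},
      N (gammaAdj γ (J v)) = v := by
    intro v hv
    rw [hkey v hv, hNL]
  refine ⟨⟨fun g _ => ?_, fun g₁ _ g₂ _ h => ?_, fun v hv => ?_⟩, hinv, ?_⟩
  · -- maps into harmonic
    intro w hw
    have : L (N (gammaAdj γ g)) = gammaAdj γ g := hLN _
    rw [this, hga, hw, map_zero]
  · -- injective
    have h2 : gammaAdj γ g₁ = gammaAdj γ g₂ := by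
      have := congrArg L h
      rwa [hLN, hLN] at this
    ext x
    obtain ⟨w, rfl⟩ := hγsurj x
    have := congrFun (congrArg DFunLike.coe h2) w
    simpa [hga] using this
  · -- surjective onto harmonic
    exact ⟨J v, Set.mem_univ _, hinv v hv⟩
  · -- bound
    refine ⟨‖L‖ + 1, by positivity, fun v hv => ?_⟩
    have hJb : ∀ t : X, ‖J v t‖ ≤ ‖L v‖ * ‖t‖ := by
      intro t
      have hne : Nonempty {w : V // γ w = t} := by
        obtain ⟨w, hw⟩ := hγsurj t; exact ⟨⟨w, hw⟩⟩
      rcases eq_or_lt_of_le (norm_nonneg (L v)) with h0 | h0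
      · obtain ⟨⟨w, hw⟩⟩ := hne
        have : J v t = L v w := by rw [← hw]; exact hJ v hv w
        have hz : ‖L v w‖ = 0 := le_antisymm
          (by calc ‖L v w‖ ≤ ‖L v‖ * ‖w‖ := (L v).le_opNorm w
                _ = 0 := by rw [← h0]; ring) (norm_nonneg _)
        rw [this, hz]
        positivity
      · rw [hquot t, mul_comm, ← div_le_iff₀ h0]
        apply le_ciInf
        intro ⟨w, hw⟩
        rw [div_le_iff₀ h0]
        have : J v t = L v w := by rw [← hw]; exact hJ v hv w
        rw [this, mul_comm]
        exact (L v).le_opNorm w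
    calc ‖J v‖ ≤ ‖L v‖ := (J v).opNorm_le_bound (norm_nonneg _) hJb
      _ ≤ ‖L‖ * ‖v‖ := L.le_opNorm v
      _ ≤ (‖L‖ + 1) * ‖v‖ := by nlinarith [norm_nonneg v, norm_nonneg L]
end

section
/- Lower bound for the dual trace: under the coercivity assumption, for every g ∈ B = X' one has ‖g‖_B ≤ ‖γ' g‖_{V'} ≤ ‖g‖_B and |⟨𝖵g, conj g⟩_{X×B}| ≥ c_L ‖S g‖²_V ≥ (c_L/‖L‖²)‖γ' g‖²_{V'}. -/
open NormedSpace

/-- lower bound for the dual trace.  Under coercivity, for every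
`g ∈ B = X'` one has `‖g‖_B ≤ ‖γ' g‖_{V'} ≤ ‖g‖_B`, and
`|⟨𝖵 g, ḡ⟩| ≥ c_L ‖S g‖²_V ≥ (c_L/‖L‖²) ‖γ' g‖²_{V'}`. -/
theorem dual_trace_lower_bound
    {V X : Type*} [NormedAddCommGroup V] [InnerProductSpace ℂ V] [CompleteSpace V]
    [NormedAddCommGroup X] [InnerProductSpace ℂ X] [CompleteSpace X]
    (L : V →L[ℂ] StrongDual ℂ V) (N : StrongDual ℂ V →L[ℂ] V)
    (hNL : ∀ v, N (L v) = v) (hLN : ∀ f, L (N f) = f)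
    (c_L : ℝ) (hc : 0 < c_L)
    (hcoer : ∀ v : V, c_L * ‖v‖ ^ 2 ≤ ‖L v v‖)
    (γ : V →L[ℂ] X) (hγsurj : Function.Surjective γ)
    (hquot : ∀ t : X, ‖t‖ = ⨅ v : {v : V // γ v = t}, ‖(v : V)‖) :
    ∀ g : StrongDual ℂ X,
      ‖g‖ ≤ ‖gammaAdj γ g‖ ∧ ‖gammaAdj γ g‖ ≤ ‖g‖ ∧
      c_L * ‖N (gammaAdj γ g)‖ ^ 2 ≤ ‖g (γ (N (gammaAdj γ g)))‖ ∧
      c_L / ‖L‖ ^ 2 * ‖gammaAdj γ g‖ ^ 2 ≤ c_L * ‖N (gammaAdj γ g)‖ ^ 2 := by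
  intro g
  have hγg : ∀ v : V, gammaAdj γ g v = g (γ v) := fun v => rfl
  have hbdd : ∀ t : X, BddBelow (Set.range fun v : {v : V // γ v = t} => ‖(v : V)‖) := by
    intro t
    exact ⟨0, by rintro x ⟨w, rfl⟩; exact norm_nonneg _⟩
  have hγnorm : ∀ v : V, ‖γ v‖ ≤ ‖v‖ := by
    intro v
    rw [hquot (γ v)]
    exact ciInf_le (hbdd _) ⟨v, rfl⟩
  -- part 1
  have h1 : ‖g‖ ≤ ‖gammaAdj γ g‖ := by
    apply g.opNorm_le_bound (norm_nonneg _)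
    intro t
    haveI : Nonempty {v : V // γ v = t} :=
      ⟨⟨(hγsurj t).choose, (hγsurj t).choose_spec⟩⟩
    rcases eq_or_lt_of_le (norm_nonneg (gammaAdj γ g)) with h0 | h0
    · have hz : gammaAdj γ g = 0 := by
        rw [← norm_eq_zero]; exact h0.symm
      obtain ⟨v, rfl⟩ := hγsurj t
      have : g (γ v) = 0 := by rw [← hγg, hz]; rfl
      rw [this]
      simpa using mul_nonneg (norm_nonneg _) (norm_nonneg _)
    · rw [hquot t, ← div_le_iff₀' h0]
      apply le_ciInf
      intro v
      rw [div_le_iff₀' h0]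
      calc ‖g t‖ = ‖gammaAdj γ g v‖ := by rw [hγg, v.2]
        _ ≤ ‖gammaAdj γ g‖ * ‖(v : V)‖ := (gammaAdj γ g).le_opNorm _
  -- part 2
  have h2 : ‖gammaAdj γ g‖ ≤ ‖g‖ := by
    apply (gammaAdj γ g).opNorm_le_bound (norm_nonneg _)
    intro v
    calc ‖g (γ v)‖ ≤ ‖g‖ * ‖γ v‖ := g.le_opNorm _
      _ ≤ ‖g‖ * ‖v‖ := by gcongr; exact hγnorm v
  refine ⟨h1, h2, ?_, ?_⟩
  · have : g (γ (N (gammaAdj γ g))) = L (N (gammaAdj γ g)) (N (gammaAdj γ g)) := by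
      rw [hLN]; rfl
    rw [this]
    exact hcoer _
  · rcases eq_or_lt_of_le (norm_nonneg L) with h0 | h0
    · have hL : L = 0 := by
        rw [← ContinuousLinearMap.opNorm_zero_iff]; exact h0.symm
      have hz : gammaAdj γ g = 0 := by
        rw [← hLN (gammaAdj γ g), hL]; rfl
      rw [hz]
      simp
    · have hf : ‖gammaAdj γ g‖ ≤ ‖L‖ * ‖N (gammaAdj γ g)‖ := by
        conv_lhs => rw [← hLN (gammaAdj γ g)]
        exact L.le_opNorm _
      have hsq : ‖gammaAdj γ g‖ ^ 2 ≤ ‖L‖ ^ 2 * ‖N (gammaAdj γ g)‖ ^ 2 := by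
        rw [← mul_pow]
        exact pow_le_pow_left₀ (norm_nonneg _) hf 2
      calc c_L / ‖L‖ ^ 2 * ‖gammaAdj γ g‖ ^ 2
          ≤ c_L / ‖L‖ ^ 2 * (‖L‖ ^ 2 * ‖N (gammaAdj γ g)‖ ^ 2) := by gcongr
        _ = c_L * ‖N (gammaAdj γ g)‖ ^ 2 := by
            field_simp
end
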